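/- Let (p_n)_{n∈ℕ} be a sequence in V, let p ∈ V, and let L be either a dual face of K or L = K (with the conventions ν_K = ν and H_K⁺ = {0}). Then the sequence of functions u ↦ ν(p_n − u) − ν(p_n) converges, uniformly on every bounded subset of V, to the function u ↦ ν_L(p − u) − ν_L(p) if and only if for every q ∈ H_L⁺ the distances dist(p_n, p + q + H_L⁺) = inf{‖p_n − (p + q + h)‖ : h ∈ H_L⁺} tend to 0 as n → ∞. -/

import Mathlib

set_option linter.unusedSectionVars false
set_option maxHeartbeats 1000000

open Bornology

/-- The polyhedral asymmetric norm `ν(u) = max {ξ_k(u) : k ∈ K}`. -/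
noncomputable def nu {V : Type*} [AddCommGroup V] [Module ℝ V] {m : ℕ}
    (ξ : Fin (m + 1) → V →ₗ[ℝ] ℝ) (u : V) : ℝ :=
  Finset.univ.sup' Finset.univ_nonempty fun k => ξ k u

/-- `ν_L(u) = max {ξ_ℓ(u) : ℓ ∈ L}` (junk value `0` for `L = ∅`). -/
noncomputable def nuL {V : Type*} [AddCommGroup V] [Module ℝ V] {m : ℕ}
    (ξ : Fin (m + 1) → V →ₗ[ℝ] ℝ) (L : Finset (Fin (m + 1))) (u : V) : ℝ :=
  if h : L.Nonempty then L.sup' h fun ℓ => ξ ℓ u else 0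

/-- `L ⊆ K` is a dual face if there is `v` with `ν(v) = 1` and `L = {k : ξ_k(v) = 1}`. -/
def IsDualFace {V : Type*} [AddCommGroup V] [Module ℝ V] {m : ℕ}
    (ξ : Fin (m + 1) → V →ₗ[ℝ] ℝ) (L : Finset (Fin (m + 1))) : Prop :=
  ∃ v : V, nu ξ v = 1 ∧ ∀ k, k ∈ L ↔ ξ k v = 1

/-- `H_L = {u : ξ_k(u) = ξ_ℓ(u) for all k, ℓ ∈ L}`. -/
def HL {V : Type*} [AddCommGroup V] [Module ℝ V] {m : ℕ}
    (ξ : Fin (m + 1) → V →ₗ[ℝ] ℝ) (L : Finset (Fin (m + 1))) : Set V :=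
  {u : V | ∀ k ∈ L, ∀ l ∈ L, ξ k u = ξ l u}

/-- `H_L⁺ = {v ∈ H_L : ξ_ℓ(v) > ξ_k(v) for all ℓ ∈ L, k ∈ K∖L}`.  (For `L = K` this set
equals `H_K`, which is `{0}` for a polyhedral norm, in accordance with the convention
`H_K⁺ = {0}`.) -/
def HLplus {V : Type*} [AddCommGroup V] [Module ℝ V] {m : ℕ}
    (ξ : Fin (m + 1) → V →ₗ[ℝ] ℝ) (L : Finset (Fin (m + 1))) : Set V :=
  {v : V | (∀ k ∈ L, ∀ l ∈ L, ξ k v = ξ l v) ∧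
    ∀ l ∈ L, ∀ k, k ∉ L → ξ k v < ξ l v}

section Aux

variable {V : Type*} [AddCommGroup V] [Module ℝ V]
  {m : ℕ} (ξ : Fin (m + 1) → V →ₗ[ℝ] ℝ) {L : Finset (Fin (m + 1))}

lemma nuL_eq (h : L.Nonempty) (u : V) : nuL ξ L u = L.sup' h fun ℓ => ξ ℓ u := dif_pos h

lemma le_nuL (h : L.Nonempty) {ℓ} (hℓ : ℓ ∈ L) (u : V) : ξ ℓ u ≤ nuL ξ L u := by
  rw [nuL_eq ξ h]; exact Finset.le_sup' (fun ℓ => ξ ℓ u) hℓ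

lemma nuL_le (h : L.Nonempty) {u : V} {c : ℝ} (hc : ∀ ℓ ∈ L, ξ ℓ u ≤ c) :
    nuL ξ L u ≤ c := by
  rw [nuL_eq ξ h]; exact Finset.sup'_le _ _ hc

lemma exists_nuL (h : L.Nonempty) (u : V) : ∃ ℓ ∈ L, nuL ξ L u = ξ ℓ u := by
  rw [nuL_eq ξ h]; exact Finset.exists_mem_eq_sup' h _

lemma nu_eq_nuL_univ (u : V) : nu ξ u = nuL ξ Finset.univ u := by
  rw [nu, nuL_eq ξ Finset.univ_nonempty]

lemma le_nu {k} (u : V) : ξ k u ≤ nu ξ u := by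
  rw [nu_eq_nuL_univ]; exact le_nuL ξ Finset.univ_nonempty (Finset.mem_univ k) u

lemma nu_le {u : V} {c : ℝ} (hc : ∀ k, ξ k u ≤ c) : nu ξ u ≤ c := by
  rw [nu_eq_nuL_univ]; exact nuL_le ξ Finset.univ_nonempty (fun ℓ _ => hc ℓ)

/-- The subspace `H_L` as a submodule. -/
def HLsub : Submodule ℝ V where
  carrier := HL ξ L
  add_mem' := by
    intro a b ha hb k hk l hl
    simp only [map_add, ha k hk l hl, hb k hk l hl]
  zero_mem' := by intro k _ l _; simp
  smul_mem' := by
    intro c a ha k hk l hl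
    simp only [map_smul, ha k hk l hl]

lemma mem_HLsub {x : V} : x ∈ HLsub ξ (L := L) ↔ x ∈ HL ξ L := Iff.rfl

end Aux

section Normed

variable {V : Type*} [NormedAddCommGroup V] [InnerProductSpace ℝ V] [FiniteDimensional ℝ V]
  {m : ℕ} (ξ : Fin (m + 1) → V →ₗ[ℝ] ℝ) {L : Finset (Fin (m + 1))}

lemma exists_C : ∃ C : ℝ, 1 ≤ C ∧ ∀ k (x : V), |ξ k x| ≤ C * ‖x‖ := by
  have h : ∀ k : Fin (m+1), ∃ c : ℝ, ∀ x : V, |ξ k x| ≤ c * ‖x‖ := by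
    intro k
    obtain ⟨c, hc⟩ := (LinearMap.toContinuousLinearMap (ξ k)).bound
    exact ⟨c, fun x => by simpa [Real.norm_eq_abs] using hc.2 x⟩
  choose c hc using h
  refine ⟨1 + Finset.univ.sup' Finset.univ_nonempty (fun k => |c k|), ?_, ?_⟩
  · have : (0:ℝ) ≤ Finset.univ.sup' Finset.univ_nonempty (fun k => |c k|) :=
      le_trans (abs_nonneg (c 0)) (Finset.le_sup' (fun k : Fin (m+1) => |c k|) (Finset.mem_univ 0))
    linarith
  · intro k x
    refine le_trans (hc k x) (mul_le_mul_of_nonneg_right ?_ (norm_nonneg x))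
    have h1 : c k ≤ |c k| := le_abs_self _
    have h2 : |c k| ≤ Finset.univ.sup' Finset.univ_nonempty (fun k => |c k|) :=
      Finset.le_sup' (fun k : Fin (m+1) => |c k|) (Finset.mem_univ k)
    linarith

lemma nuL_lip (h : L.Nonempty) {C : ℝ} (hC : ∀ k (x : V), |ξ k x| ≤ C * ‖x‖) (a b : V) :
    nuL ξ L a - nuL ξ L b ≤ C * ‖a - b‖ := by
  have : nuL ξ L a ≤ nuL ξ L b + C * ‖a - b‖ := by
    refine nuL_le ξ h (fun ℓ hℓ => ?_)
    have h1 : ξ ℓ a = ξ ℓ b + ξ ℓ (a - b) := by rw [← LinearMap.map_add, add_sub_cancel]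
    have h2 : ξ ℓ (a - b) ≤ C * ‖a - b‖ := le_trans (le_abs_self _) (hC ℓ _)
    have h3 := le_nuL ξ h hℓ b
    linarith
  linarith

lemma nuL_lip_abs (h : L.Nonempty) {C : ℝ} (hC : ∀ k (x : V), |ξ k x| ≤ C * ‖x‖) (a b : V) :
    |nuL ξ L a - nuL ξ L b| ≤ C * ‖a - b‖ := by
  rw [abs_sub_le_iff]
  refine ⟨nuL_lip ξ h hC a b, ?_⟩
  rw [norm_sub_rev]
  exact nuL_lip ξ h hC b a

/-- Key formula: if `y ∈ H_L` has all its `L`-gaps at least `2C‖x‖`, then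
`ν(y + x) = ξ_{ℓ0}(y) + ν_L(x)`. -/
lemma nu_add_formula (hLne : L.Nonempty) {C : ℝ} (hC : ∀ k (x : V), |ξ k x| ≤ C * ‖x‖)
    {y x : V} {ℓ0 : Fin (m+1)} (hℓ0 : ℓ0 ∈ L) (hy : y ∈ HL ξ L)
    (hgap : ∀ ℓ ∈ L, ∀ k, k ∉ L → ξ k y + 2 * C * ‖x‖ ≤ ξ ℓ y) :
    nu ξ (y + x) = ξ ℓ0 y + nuL ξ L x := by
  have hCx : (0:ℝ) ≤ C * ‖x‖ := by
    have h1 : (0:ℝ) ≤ |ξ 0 x| := abs_nonneg _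
    have := hC 0 x
    linarith
  apply le_antisymm
  · refine nu_le ξ (fun k => ?_)
    rw [map_add]
    by_cases hk : k ∈ L
    · have h1 : ξ k y = ξ ℓ0 y := hy k hk ℓ0 hℓ0
      have h2 : ξ k x ≤ nuL ξ L x := le_nuL ξ hLne hk x
      linarith
    · have h1 : ξ k y + 2 * C * ‖x‖ ≤ ξ ℓ0 y := hgap ℓ0 hℓ0 k hk
      have h2 : ξ k x ≤ C * ‖x‖ := le_trans (le_abs_self _) (hC k x)
      have h3 : -(C * ‖x‖) ≤ ξ ℓ0 x := by
        have := hC ℓ0 x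
        have := neg_abs_le (ξ ℓ0 x)
        linarith
      have h4 : ξ ℓ0 x ≤ nuL ξ L x := le_nuL ξ hLne hℓ0 x
      linarith
  · obtain ⟨ℓ, hℓ, hval⟩ := exists_nuL ξ hLne x
    have h1 : ξ ℓ (y + x) ≤ nu ξ (y + x) := le_nu ξ (y + x)
    rw [map_add] at h1
    have h2 : ξ ℓ y = ξ ℓ0 y := hy ℓ hℓ ℓ0 hℓ0
    rw [hval]
    linarith

end Normed
lemma aux_bound {V W : Type*} [NormedAddCommGroup V] [InnerProductSpace ℝ V]
    [FiniteDimensional ℝ V] [NormedAddCommGroup W] [NormedSpace ℝ W]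
    (f : V →ₗ[ℝ] W) (S : Submodule ℝ V) (hker : ∀ x, x ∈ S ↔ f x = 0) :
    ∃ D : ℝ, 0 < D ∧ ∀ x : V, ∃ y ∈ S, ‖x - y‖ ≤ D * ‖f x‖ := by
  set g : Sᗮ →ₗ[ℝ] W := f.comp Sᗮ.subtype with hg
  have hginj : Function.Injective g := by
    rw [← LinearMap.ker_eq_bot, Submodule.eq_bot_iff]
    rintro ⟨w, hw⟩ hmem
    have hwS : w ∈ S := (hker w).2 hmem
    have : w = 0 := Submodule.disjoint_def.1 (Submodule.orthogonal_disjoint S) w hwS hw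
    simp [this]
  set e := LinearEquiv.ofInjective g hginj with he
  obtain ⟨D0, hD0pos, hD0⟩ : ∃ D0 : ℝ, 0 < D0 ∧ ∀ z : LinearMap.range g, ‖e.symm z‖ ≤ D0 * ‖z‖ := by
    obtain ⟨c, hc⟩ := (LinearMap.toContinuousLinearMap e.symm.toLinearMap).bound
    exact ⟨c, hc.1, fun z => hc.2 z⟩
  refine ⟨D0, hD0pos, fun x => ?_⟩
  set y : V := (S.orthogonalProjectionOnto x : V) with hy
  have hyS : y ∈ S := (S.orthogonalProjectionOnto x).2
  refine ⟨y, hyS, ?_⟩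
  have hw : x - y ∈ Sᗮ := Submodule.sub_starProjection_mem_orthogonal (K := S) x
  set w : Sᗮ := ⟨x - y, hw⟩ with hwdef
  have h1 : e.symm (e w) = w := e.symm_apply_apply w
  have h2 : ‖x - y‖ = ‖e.symm (e w)‖ := by rw [h1]; rfl
  have h4 : g w = f x := by
    have hfy : f y = 0 := (hker y).1 hyS
    simp [hg, LinearMap.comp_apply, hwdef, map_sub, hfy]
  have h5 : ‖(e w : W)‖ = ‖f x‖ := by
    rw [← h4, he, LinearEquiv.ofInjective_apply]
  calc ‖x - y‖ = ‖e.symm (e w)‖ := h2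
    _ ≤ D0 * ‖e w‖ := hD0 (e w)
    _ = D0 * ‖f x‖ := by rw [show ‖e w‖ = ‖(e w : W)‖ from rfl, h5]
section Main

open Filter

variable {V : Type*} [NormedAddCommGroup V] [InnerProductSpace ℝ V] [FiniteDimensional ℝ V]
  {m : ℕ} (ξ : Fin (m + 1) → V →ₗ[ℝ] ℝ) (L : Finset (Fin (m + 1))) (pseq : ℕ → V) (p : V)

/-- Statement A: `p_n - p` approaches the subspace `H_L`. -/
def StatA : Prop :=
  ∀ ε > (0:ℝ), ∀ᶠ n in atTop, ∃ y ∈ HL ξ L, ‖pseq n - p - y‖ < ε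

/-- Statement B: all `L`-gaps of `p_n` tend to `+∞`. -/
def StatB : Prop :=
  ∀ T : ℝ, ∀ᶠ n in atTop, ∀ ℓ, ℓ ∈ L → ∀ k, k ∉ L → T ≤ ξ ℓ (pseq n) - ξ k (pseq n)

lemma claim1 (hLne : L.Nonempty)
    (hfacet : ∀ k, ∃ u : V, ξ k u = 1 ∧ ∀ l, l ≠ k → ξ l u < 1)
    (hpt : ∀ u : V, Tendsto (fun n => nu ξ (pseq n - u) - nu ξ (pseq n)) atTop
      (nhds (nuL ξ L (p - u) - nuL ξ L p)))
    {ℓ : Fin (m+1)} (hℓ : ℓ ∈ L) :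
    Tendsto (fun n => ξ ℓ (pseq n) - nu ξ (pseq n)) atTop (nhds (ξ ℓ p - nuL ξ L p)) := by
  rw [Metric.tendsto_atTop]
  intro ε hε
  set b : ℝ := ξ ℓ p - nuL ξ L p with hbdef
  set ε' : ℝ := min (ε/2) 1 with hε'def
  have hε' : 0 < ε' := lt_min (by linarith) one_pos
  have hε'le : ε' ≤ ε/2 := min_le_left _ _
  have hε'1 : ε' ≤ 1 := min_le_right _ _
  obtain ⟨w, hw1, hw2⟩ := hfacet ℓ
  set A : ℝ := L.sup' hLne (fun ℓ' => if ℓ' = ℓ then (0:ℝ) else (ξ ℓ' p - ξ ℓ p)/(1 - ξ ℓ' w))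
    with hAdef
  set B : ℝ := Finset.univ.sup' Finset.univ_nonempty
    (fun j => if j = ℓ then (0:ℝ) else (2 - b)/(1 - ξ j w)) with hBdef
  set t : ℝ := max A B with htdef
  -- (i)
  have hi : ∀ ℓ' ∈ L, ξ ℓ' p + t * ξ ℓ' w ≤ ξ ℓ p + t := by
    intro ℓ' hℓ'
    by_cases hcase : ℓ' = ℓ
    · subst hcase; rw [hw1]; ring_nf; exact le_refl _
    · have hlt : ξ ℓ' w < 1 := hw2 ℓ' hcase
      have hpos : 0 < 1 - ξ ℓ' w := by linarith
      have hle : (ξ ℓ' p - ξ ℓ p)/(1 - ξ ℓ' w) ≤ t := by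
        have h1 := Finset.le_sup'
          (f := fun ℓ' => if ℓ' = ℓ then (0:ℝ) else (ξ ℓ' p - ξ ℓ p)/(1 - ξ ℓ' w)) hℓ'
        rw [← hAdef, if_neg hcase] at h1
        exact le_trans h1 (le_max_left A B)
      rw [div_le_iff₀ hpos] at hle
      nlinarith
  -- (iii)
  have hiii : ∀ j, j ≠ ℓ → t * ξ j w ≤ b + t - 2 := by
    intro j hj
    have hlt : ξ j w < 1 := hw2 j hj
    have hpos : 0 < 1 - ξ j w := by linarith
    have hle : (2 - b)/(1 - ξ j w) ≤ t := by
      have h1 := Finset.le_sup'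
        (f := fun j => if j = ℓ then (0:ℝ) else (2 - b)/(1 - ξ j w)) (Finset.mem_univ j)
      rw [← hBdef, if_neg hj] at h1
      exact le_trans h1 (le_max_right A B)
    rw [div_le_iff₀ hpos] at hle
    nlinarith
  -- value of the limit at `u = -(t • w)`
  have hf : nuL ξ L (p - -(t • w)) - nuL ξ L p = b + t := by
    have h1 : p - -(t • w) = p + t • w := by abel
    rw [h1]
    have h2 : nuL ξ L (p + t • w) = ξ ℓ p + t := by
      apply le_antisymm
      · refine nuL_le ξ hLne (fun ℓ' hℓ' => ?_)
        rw [map_add, map_smul, smul_eq_mul]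
        exact hi ℓ' hℓ'
      · have := le_nuL ξ hLne hℓ (p + t • w)
        rw [map_add, map_smul, smul_eq_mul, hw1, mul_one] at this
        linarith
    rw [h2]; ring
  obtain ⟨N, hN⟩ := Metric.tendsto_atTop.1 (hpt (-(t • w))) ε' hε'
  refine ⟨N, fun n hn => ?_⟩
  have hNn := hN n hn
  rw [hf, Real.dist_eq] at hNn
  have hsub : pseq n - -(t • w) = pseq n + t • w := by abel
  rw [hsub] at hNn
  set fn : ℝ := nu ξ (pseq n + t • w) - nu ξ (pseq n) with hfn
  have habs := abs_lt.1 hNn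
  -- lower bound for `nu (pseq n + t • w)`
  have hlow : ξ ℓ (pseq n) + t ≤ nu ξ (pseq n + t • w) := by
    have := le_nu ξ (u := pseq n + t • w) (k := ℓ)
    rw [map_add, map_smul, smul_eq_mul, hw1, mul_one] at this
    exact this
  -- upper bound
  have hup : nu ξ (pseq n + t • w) ≤ max (ξ ℓ (pseq n) + t) (nu ξ (pseq n) + (b + t - 2)) := by
    refine nu_le ξ (fun j => ?_)
    rw [map_add, map_smul, smul_eq_mul]
    by_cases hcase : j = ℓ
    · subst hcase
      rw [hw1, mul_one]
      exact le_max_left _ _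
    · have h1 : ξ j (pseq n) ≤ nu ξ (pseq n) := le_nu ξ _
      have h2 := hiii j hcase
      exact le_trans (by linarith) (le_max_right _ _)
  -- conclude
  rw [Real.dist_eq]
  rw [abs_lt]
  constructor
  · -- b - ε < ξ ℓ (pseq n) - nu ξ (pseq n) : use lower bound on fn and hup
    have h1 : b + t - ε' < fn := by linarith [habs.1]
    have h2 : fn ≤ max (ξ ℓ (pseq n) + t) (nu ξ (pseq n) + (b + t - 2)) - nu ξ (pseq n) := by
      rw [hfn]; linarith [hup]
    rcases max_cases (ξ ℓ (pseq n) + t) (nu ξ (pseq n) + (b + t - 2)) with ⟨heq, _⟩ | ⟨heq, _⟩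
    · rw [heq] at h2; linarith
    · rw [heq] at h2; linarith
  · -- upper: fn ≥ ξ ℓ pseq n + t - nu pseq n
    have h1 : fn < b + t + ε' := by linarith [habs.2]
    have h2 : ξ ℓ (pseq n) + t - nu ξ (pseq n) ≤ fn := by rw [hfn]; linarith [hlow]
    linarith

lemma claim2 (hLne : L.Nonempty)
    (hfacet : ∀ k, ∃ u : V, ξ k u = 1 ∧ ∀ l, l ≠ k → ξ l u < 1)
    (hpt : ∀ u : V, Tendsto (fun n => nu ξ (pseq n - u) - nu ξ (pseq n)) atTop
      (nhds (nuL ξ L (p - u) - nuL ξ L p)))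
    {k : Fin (m+1)} (hk : k ∉ L) :
    Tendsto (fun n => ξ k (pseq n) - nu ξ (pseq n)) atTop atBot := by
  rw [tendsto_atBot]
  intro T
  obtain ⟨w, hw1, hw2⟩ := hfacet k
  set t : ℝ := L.sup' hLne (fun ℓ => (ξ ℓ p - nuL ξ L p - T + 1)/(1 - ξ ℓ w)) with htdef
  have hT : nuL ξ L (p + t • w) ≤ nuL ξ L p + T - 1 + t := by
    refine nuL_le ξ hLne (fun ℓ hℓ => ?_)
    have hne : ℓ ≠ k := fun h => hk (h ▸ hℓ)
    have hlt : ξ ℓ w < 1 := hw2 ℓ hne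
    have hpos : 0 < 1 - ξ ℓ w := by linarith
    have hle := Finset.le_sup'
      (f := fun ℓ => (ξ ℓ p - nuL ξ L p - T + 1)/(1 - ξ ℓ w)) hℓ
    rw [← htdef, div_le_iff₀ hpos] at hle
    rw [map_add, map_smul, smul_eq_mul]
    nlinarith
  obtain ⟨N, hN⟩ := Metric.tendsto_atTop.1 (hpt (-(t • w))) 1 one_pos
  rw [Filter.eventually_atTop]
  refine ⟨N, fun n hn => ?_⟩
  have hNn := hN n hn
  rw [Real.dist_eq] at hNn
  have hsub1 : pseq n - -(t • w) = pseq n + t • w := by abel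
  have hsub2 : p - -(t • w) = p + t • w := by abel
  rw [hsub1, hsub2] at hNn
  have habs := (abs_lt.1 hNn).2
  have hlow : ξ k (pseq n) + t ≤ nu ξ (pseq n + t • w) := by
    have := le_nu ξ (u := pseq n + t • w) (k := k)
    rw [map_add, map_smul, smul_eq_mul, hw1, mul_one] at this
    exact this
  linarith

lemma lemI (hLne : L.Nonempty)
    (hfacet : ∀ k, ∃ u : V, ξ k u = 1 ∧ ∀ l, l ≠ k → ξ l u < 1)
    (hpt : ∀ u : V, Tendsto (fun n => nu ξ (pseq n - u) - nu ξ (pseq n)) atTop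
      (nhds (nuL ξ L (p - u) - nuL ξ L p))) :
    StatA ξ L pseq p ∧ StatB ξ L pseq := by
  constructor
  · -- StatA via the projection bound
    obtain ⟨ℓ0, hℓ0⟩ := id hLne
    set fmap : V →ₗ[ℝ] (Fin (m+1) → ℝ) :=
      LinearMap.pi (fun k => if k ∈ L then ξ k - ξ ℓ0 else 0) with hfmap
    have hker : ∀ x : V, x ∈ HLsub ξ (L := L) ↔ fmap x = 0 := by
      intro x
      rw [mem_HLsub]
      constructor
      · intro hx
        funext k
        rw [hfmap, LinearMap.pi_apply]
        by_cases hk : k ∈ L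
        · rw [if_pos hk]
          simp [LinearMap.sub_apply, hx k hk ℓ0 hℓ0]
        · rw [if_neg hk]; rfl
      · intro hx k hkL l hlL
        have h1 : fmap x k = 0 := by rw [hx]; rfl
        have h2 : fmap x l = 0 := by rw [hx]; rfl
        rw [hfmap, LinearMap.pi_apply, if_pos hkL, LinearMap.sub_apply] at h1
        rw [hfmap, LinearMap.pi_apply, if_pos hlL, LinearMap.sub_apply] at h2
        have : ξ k x = ξ ℓ0 x := by linarith
        have h3 : ξ l x = ξ ℓ0 x := by linarith
        rw [this, h3]
    obtain ⟨D, hDpos, hD⟩ := aux_bound fmap (HLsub ξ (L := L)) hker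
    intro ε hε
    have hr : (0:ℝ) < ε / (2 * D) := by positivity
    have hcomp : ∀ k : Fin (m+1), ∀ᶠ n in atTop, ‖fmap (pseq n - p) k‖ < ε / (2 * D) := by
      intro k
      by_cases hk : k ∈ L
      · have h1 := (claim1 ξ L pseq p hLne hfacet hpt hk).sub
          (claim1 ξ L pseq p hLne hfacet hpt hℓ0)
        have h2 : Tendsto (fun n => ξ k (pseq n) - ξ ℓ0 (pseq n)) atTop
            (nhds (ξ k p - ξ ℓ0 p)) := by
          have heq : (fun n => ξ k (pseq n) - ξ ℓ0 (pseq n)) =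
              (fun n => (ξ k (pseq n) - nu ξ (pseq n)) - (ξ ℓ0 (pseq n) - nu ξ (pseq n))) := by
            funext n; ring
          have heq2 : ξ k p - ξ ℓ0 p =
              (ξ k p - nuL ξ L p) - (ξ ℓ0 p - nuL ξ L p) := by ring
          rw [heq, heq2]
          exact h1
        have h3 : Tendsto (fun n => fmap (pseq n - p) k) atTop (nhds 0) := by
          have heq : (fun n => fmap (pseq n - p) k) =
              (fun n => (ξ k (pseq n) - ξ ℓ0 (pseq n)) - (ξ k p - ξ ℓ0 p)) := by
            funext n
            rw [hfmap, LinearMap.pi_apply, if_pos hk, LinearMap.sub_apply, map_sub, map_sub]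
            ring
          rw [heq]
          have := h2.sub (tendsto_const_nhds (x := ξ k p - ξ ℓ0 p))
          simpa using this
        have h4 := Metric.tendsto_atTop.1 h3 (ε / (2 * D)) hr
        obtain ⟨N, hN⟩ := h4
        rw [Filter.eventually_atTop]
        exact ⟨N, fun n hn => by
          have := hN n hn
          rwa [Real.dist_eq, sub_zero, ← Real.norm_eq_abs] at this⟩
      · refine Filter.Eventually.of_forall (fun n => ?_)
        rw [hfmap, LinearMap.pi_apply, if_neg hk]
        simpa using hr
    have hev : ∀ᶠ n in atTop, ∀ k : Fin (m+1), ‖fmap (pseq n - p) k‖ < ε / (2 * D) :=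
      Filter.eventually_all.2 hcomp
    refine hev.mono (fun n hn => ?_)
    obtain ⟨y, hy, hny⟩ := hD (pseq n - p)
    refine ⟨y, hy, ?_⟩
    have h5 : ‖fmap (pseq n - p)‖ ≤ ε / (2 * D) := by
      apply pi_norm_le_iff_of_nonneg (le_of_lt hr) |>.2
      exact fun k => le_of_lt (hn k)
    have h6 : D * ‖fmap (pseq n - p)‖ ≤ D * (ε / (2 * D)) :=
      mul_le_mul_of_nonneg_left h5 (le_of_lt hDpos)
    have h7 : D * (ε / (2 * D)) = ε / 2 := by field_simp
    have : ‖pseq n - p - y‖ ≤ ε / 2 := by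
      calc ‖pseq n - p - y‖ ≤ D * ‖fmap (pseq n - p)‖ := hny
        _ ≤ ε / 2 := by rw [← h7]; exact h6
    linarith
  · -- StatB
    intro T
    set Bmin : ℝ := L.inf' hLne (fun ℓ => ξ ℓ p - nuL ξ L p) with hBmin
    have h1 : ∀ᶠ n in atTop, ∀ ℓ, ℓ ∈ L → Bmin - 1 ≤ ξ ℓ (pseq n) - nu ξ (pseq n) := by
      rw [Filter.eventually_all]
      intro ℓ
      by_cases hℓ : ℓ ∈ L
      · obtain ⟨N, hN⟩ := Metric.tendsto_atTop.1 (claim1 ξ L pseq p hLne hfacet hpt hℓ) 1 one_pos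
        rw [Filter.eventually_atTop]
        refine ⟨N, fun n hn _ => ?_⟩
        have := hN n hn
        rw [Real.dist_eq] at this
        have h2 := (abs_lt.1 this).1
        have h3 : Bmin ≤ ξ ℓ p - nuL ξ L p := Finset.inf'_le _ hℓ
        linarith
      · exact Filter.Eventually.of_forall (fun n hc => absurd hc hℓ)
    have h2 : ∀ᶠ n in atTop, ∀ k, k ∉ L → ξ k (pseq n) - nu ξ (pseq n) ≤ Bmin - 1 - T := by
      rw [Filter.eventually_all]
      intro k
      by_cases hk : k ∈ L
      · exact Filter.Eventually.of_forall (fun n hc => absurd hk hc)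
      · have h3 := (claim2 ξ L pseq p hLne hfacet hpt hk).eventually
          (Filter.eventually_le_atBot (Bmin - 1 - T))
        exact h3.mono (fun n hn _ => hn)
    filter_upwards [h1, h2] with n hn1 hn2
    intro ℓ hℓ k hk
    have := hn1 ℓ hℓ
    have := hn2 k hk
    have heq : ξ ℓ (pseq n) - ξ k (pseq n) =
        (ξ ℓ (pseq n) - nu ξ (pseq n)) - (ξ k (pseq n) - nu ξ (pseq n)) := by ring
    rw [heq]
    linarith

end Main
section Main2

open Filter

variable {V : Type*} [NormedAddCommGroup V] [InnerProductSpace ℝ V] [FiniteDimensional ℝ V]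
  {m : ℕ} (ξ : Fin (m + 1) → V →ₗ[ℝ] ℝ) (L : Finset (Fin (m + 1))) (pseq : ℕ → V) (p : V)

lemma L_nonempty (hL : IsDualFace ξ L ∨ L = Finset.univ) : L.Nonempty := by
  rcases hL with ⟨v, hv1, hv2⟩ | rfl
  · obtain ⟨k, _, hk⟩ := exists_nuL ξ Finset.univ_nonempty v
    rw [← nu_eq_nuL_univ, hv1] at hk
    exact ⟨k, (hv2 k).2 hk.symm⟩
  · exact Finset.univ_nonempty

lemma exists_zv (hL : IsDualFace ξ L ∨ L = Finset.univ) : ∃ v, v ∈ HLplus ξ L := by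
  rcases hL with ⟨v, hv1, hv2⟩ | rfl
  · refine ⟨v, fun k hk l hl => ?_, fun l hl k hk => ?_⟩
    · rw [(hv2 k).1 hk, (hv2 l).1 hl]
    · rw [(hv2 l).1 hl]
      have h1 : ξ k v ≤ 1 := by rw [← hv1]; exact le_nu ξ v
      have h2 : ξ k v ≠ 1 := fun h => hk ((hv2 k).2 h)
      exact lt_of_le_of_ne h1 h2
  · exact ⟨0, fun k _ l _ => by simp, fun l _ k hk => absurd (Finset.mem_univ k) hk⟩

lemma lemII (hLne : L.Nonempty) {C : ℝ} (hC1 : 1 ≤ C) (hC : ∀ k (x : V), |ξ k x| ≤ C * ‖x‖)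
    (hA : StatA ξ L pseq p) (hB : StatB ξ L pseq) {q : V} (hq : q ∈ HLplus ξ L) :
    Tendsto (fun n => Metric.infDist (pseq n) ((fun h => p + q + h) '' HLplus ξ L))
      atTop (nhds 0) := by
  rw [Metric.tendsto_atTop]
  intro ε hε
  have hε' : (0:ℝ) < min ε 1 := lt_min hε one_pos
  set T : ℝ := 2*C + 2*C*‖p‖ + 2*C*‖q‖ + 1 with hT
  have hev := (hA (min ε 1) hε').and (hB T)
  rw [Filter.eventually_atTop] at hev
  obtain ⟨N, hN⟩ := hev
  refine ⟨N, fun n hn => ?_⟩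
  obtain ⟨⟨y, hy, hny⟩, hgap⟩ := hN n hn
  set e : V := pseq n - p - y with he
  have hne1 : ‖e‖ < 1 := lt_of_lt_of_le hny (min_le_right _ _)
  have hmem : y - q ∈ HLplus ξ L := by
    constructor
    · intro k hk l hl
      rw [map_sub, map_sub, hy k hk l hl, hq.1 k hk l hl]
    · intro l hl k hk
      rw [map_sub, map_sub, sub_lt_sub_iff]
      have h1 : T ≤ ξ l (pseq n) - ξ k (pseq n) := hgap l hl k hk
      have h2 : ξ l y = ξ l (pseq n) - ξ l p - ξ l e := by rw [he]; simp [map_sub]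
      have h3 : ξ k y = ξ k (pseq n) - ξ k p - ξ k e := by rw [he]; simp [map_sub]
      have hb1 : |ξ l p| ≤ C * ‖p‖ := hC l p
      have hb2 : |ξ k p| ≤ C * ‖p‖ := hC k p
      have hb3 : |ξ l e| ≤ C * ‖e‖ := hC l e
      have hb4 : |ξ k e| ≤ C * ‖e‖ := hC k e
      have hb5 : |ξ l q| ≤ C * ‖q‖ := hC l q
      have hb6 : |ξ k q| ≤ C * ‖q‖ := hC k q
      have hCpos : (0:ℝ) < C := lt_of_lt_of_le one_pos hC1
      have hb7 : C * ‖e‖ ≤ C := by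
        have := mul_le_mul_of_nonneg_left (le_of_lt hne1) (le_of_lt hCpos)
        simpa using this
      rw [abs_le] at hb1 hb2 hb3 hb4 hb5 hb6
      rw [h2, h3]
      linarith [hb1.1, hb1.2, hb2.1, hb2.2, hb3.1, hb3.2, hb4.1, hb4.2, hb5.1, hb5.2,
        hb6.1, hb6.2]
  have hdistle : Metric.infDist (pseq n) ((fun h => p + q + h) '' HLplus ξ L)
      ≤ dist (pseq n) (p + q + (y - q)) :=
    Metric.infDist_le_dist_of_mem ⟨y - q, hmem, rfl⟩
  have hdeq : dist (pseq n) (p + q + (y - q)) = ‖e‖ := by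
    rw [dist_eq_norm, he]
    congr 1
    abel
  rw [Real.dist_eq, sub_zero, abs_of_nonneg Metric.infDist_nonneg]
  calc Metric.infDist (pseq n) ((fun h => p + q + h) '' HLplus ξ L)
      ≤ ‖e‖ := by rw [← hdeq]; exact hdistle
    _ < min ε 1 := hny
    _ ≤ ε := min_le_left _ _

lemma lemIV (hLne : L.Nonempty) {C : ℝ} (hC1 : 1 ≤ C) (hC : ∀ k (x : V), |ξ k x| ≤ C * ‖x‖)
    (hA : StatA ξ L pseq p) (hB : StatB ξ L pseq) :
    ∀ R > (0 : ℝ), ∀ ε > (0 : ℝ), ∃ N : ℕ, ∀ n ≥ N, ∀ u : V, ‖u‖ ≤ R →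
      |nu ξ (pseq n - u) - nu ξ (pseq n) - (nuL ξ L (p - u) - nuL ξ L p)| < ε := by
  intro R hR ε hε
  have hCpos : (0:ℝ) < C := lt_of_lt_of_le one_pos hC1
  set M : ℝ := ‖p‖ + 1 + R with hM
  set T : ℝ := 2*C*M + 2*C*‖p‖ + 2*C with hT
  set ε' : ℝ := min 1 (ε/(4*C)) with hε'def
  have hε' : 0 < ε' := lt_min one_pos (by positivity)
  have hev := (hA ε' hε').and (hB T)
  rw [Filter.eventually_atTop] at hev
  obtain ⟨N, hN⟩ := hev
  refine ⟨N, fun n hn u hu => ?_⟩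
  obtain ⟨⟨y, hy, hny⟩, hgapn⟩ := hN n hn
  obtain ⟨ℓ0, hℓ0⟩ := id hLne
  set e : V := pseq n - p - y with he
  have hne1 : ‖e‖ ≤ 1 := le_of_lt (lt_of_lt_of_le hny (min_le_left _ _))
  have hne2 : ‖e‖ < ε/(4*C) := lt_of_lt_of_le hny (min_le_right _ _)
  -- gap transfer to y
  have hgapy : ∀ ℓ ∈ L, ∀ k, k ∉ L → ξ k y + 2*C*M ≤ ξ ℓ y := by
    intro ℓ hℓ k hk
    have h1 : T ≤ ξ ℓ (pseq n) - ξ k (pseq n) := hgapn ℓ hℓ k hk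
    have h2 : ξ ℓ y = ξ ℓ (pseq n) - ξ ℓ p - ξ ℓ e := by rw [he]; simp [map_sub]
    have h3 : ξ k y = ξ k (pseq n) - ξ k p - ξ k e := by rw [he]; simp [map_sub]
    have hb1 : |ξ ℓ p| ≤ C * ‖p‖ := hC ℓ p
    have hb2 : |ξ k p| ≤ C * ‖p‖ := hC k p
    have hb3 : |ξ ℓ e| ≤ C * ‖e‖ := hC ℓ e
    have hb4 : |ξ k e| ≤ C * ‖e‖ := hC k e
    have hb7 : C * ‖e‖ ≤ C := by
      have := mul_le_mul_of_nonneg_left hne1 (le_of_lt hCpos)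
      simpa using this
    rw [abs_le] at hb1 hb2 hb3 hb4
    rw [h2, h3]
    linarith [hb1.1, hb1.2, hb2.1, hb2.2, hb3.1, hb3.2, hb4.1, hb4.2]
  have hyH : y ∈ HL ξ L := hy
  -- formula for nu (pseq n - u)
  have hx1 : ‖p + e - u‖ ≤ M := by
    calc ‖p + e - u‖ ≤ ‖p + e‖ + ‖u‖ := norm_sub_le _ _
      _ ≤ ‖p‖ + ‖e‖ + ‖u‖ := by linarith [norm_add_le p e]
      _ ≤ M := by rw [hM]; linarith
  have hx2 : ‖p + e‖ ≤ M := by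
    calc ‖p + e‖ ≤ ‖p‖ + ‖e‖ := norm_add_le _ _
      _ ≤ M := by rw [hM]; linarith [hR]
  have hform1 : nu ξ (pseq n - u) = ξ ℓ0 y + nuL ξ L (p + e - u) := by
    have hd : pseq n - u = y + (p + e - u) := by rw [he]; abel
    rw [hd]
    refine nu_add_formula ξ hLne hC hℓ0 hyH (fun ℓ hℓ k hk => ?_)
    have := hgapy ℓ hℓ k hk
    nlinarith [hx1, hCpos]
  have hform2 : nu ξ (pseq n) = ξ ℓ0 y + nuL ξ L (p + e) := by
    have hd : pseq n = y + (p + e) := by rw [he]; abel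
    rw [hd]
    refine nu_add_formula ξ hLne hC hℓ0 hyH (fun ℓ hℓ k hk => ?_)
    have := hgapy ℓ hℓ k hk
    nlinarith [hx2, hCpos]
  have hl1 : |nuL ξ L (p + e - u) - nuL ξ L (p - u)| ≤ C * ‖e‖ := by
    have := nuL_lip_abs ξ hLne hC (p + e - u) (p - u)
    have heq : (p + e - u) - (p - u) = e := by abel
    rwa [heq] at this
  have hl2 : |nuL ξ L (p + e) - nuL ξ L p| ≤ C * ‖e‖ := by
    have := nuL_lip_abs ξ hLne hC (p + e) p
    have heq : (p + e) - p = e := by abel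
    rwa [heq] at this
  have hkey : nu ξ (pseq n - u) - nu ξ (pseq n) - (nuL ξ L (p - u) - nuL ξ L p)
      = (nuL ξ L (p + e - u) - nuL ξ L (p - u)) - (nuL ξ L (p + e) - nuL ξ L p) := by
    rw [hform1, hform2]; ring
  rw [hkey]
  have habs : |(nuL ξ L (p + e - u) - nuL ξ L (p - u)) - (nuL ξ L (p + e) - nuL ξ L p)|
      ≤ |nuL ξ L (p + e - u) - nuL ξ L (p - u)| + |nuL ξ L (p + e) - nuL ξ L p| := by
    rw [sub_eq_add_neg]
    refine le_trans (abs_add_le _ _) ?_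
    rw [abs_neg]
  have hCe : C * ‖e‖ < ε/4 := by
    have := mul_lt_mul_of_pos_left hne2 hCpos
    rw [show C * (ε/(4*C)) = ε/4 by field_simp] at this
    exact this
  calc |(nuL ξ L (p + e - u) - nuL ξ L (p - u)) - (nuL ξ L (p + e) - nuL ξ L p)|
      ≤ |nuL ξ L (p + e - u) - nuL ξ L (p - u)| + |nuL ξ L (p + e) - nuL ξ L p| := habs
    _ ≤ C * ‖e‖ + C * ‖e‖ := add_le_add hl1 hl2
    _ < ε/4 + ε/4 := by linarith
    _ < ε := by linarith

lemma lemIII (hLne : L.Nonempty) {C : ℝ} (hC1 : 1 ≤ C) (hC : ∀ k (x : V), |ξ k x| ≤ C * ‖x‖)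
    {zv : V} (hzv : zv ∈ HLplus ξ L)
    (hRHS : ∀ q ∈ HLplus ξ L,
      Tendsto (fun n => Metric.infDist (pseq n) ((fun h => p + q + h) '' HLplus ξ L))
        atTop (nhds 0)) :
    StatA ξ L pseq p ∧ StatB ξ L pseq := by
  have hCpos : (0:ℝ) < C := lt_of_lt_of_le one_pos hC1
  constructor
  · intro ε hε
    obtain ⟨N, hN⟩ := Metric.tendsto_atTop.1 (hRHS zv hzv) ε hε
    rw [Filter.eventually_atTop]
    refine ⟨N, fun n hn => ?_⟩
    have hNn := hN n hn
    rw [Real.dist_eq, sub_zero, abs_of_nonneg Metric.infDist_nonneg] at hNn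
    have hSne : ((fun h => p + zv + h) '' HLplus ξ L).Nonempty := ⟨p + zv + zv, ⟨zv, hzv, rfl⟩⟩
    obtain ⟨ypt, hyS, hd⟩ := (Metric.infDist_lt_iff hSne).1 hNn
    obtain ⟨h0, hh0, rfl⟩ := hyS
    refine ⟨zv + h0, fun k hk l hl => ?_, ?_⟩
    · rw [map_add, map_add, hzv.1 k hk l hl, hh0.1 k hk l hl]
    · have : ‖pseq n - p - (zv + h0)‖ = dist (pseq n) (p + zv + h0) := by
        rw [dist_eq_norm]
        congr 1
        abel
      rw [this]
      exact hd
  · intro T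
    rw [Filter.eventually_all]
    intro ℓ
    by_cases hℓ : ℓ ∈ L
    swap
    · exact Filter.Eventually.of_forall (fun n hc => absurd hc hℓ)
    have hall : ∀ᶠ n in atTop, ∀ k, k ∉ L → T ≤ ξ ℓ (pseq n) - ξ k (pseq n) := by
      rw [Filter.eventually_all]
      intro k
      by_cases hk : k ∈ L
      · exact Filter.Eventually.of_forall (fun n hc => absurd hk hc)
      have hg : 0 < ξ ℓ zv - ξ k zv := sub_pos.2 (hzv.2 ℓ hℓ k hk)
      set g : ℝ := ξ ℓ zv - ξ k zv with hgdef
      set s : ℝ := max 1 ((T - (ξ ℓ p - ξ k p) + 2*C)/g) with hsdef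
      have hs1 : 1 ≤ s := le_max_left _ _
      have hspos : 0 < s := lt_of_lt_of_le one_pos hs1
      have hsg : T - (ξ ℓ p - ξ k p) + 2*C ≤ s * g := by
        have h1 : (T - (ξ ℓ p - ξ k p) + 2*C)/g ≤ s := le_max_right _ _
        rw [div_le_iff₀ hg] at h1
        linarith
      have hqmem : s • zv ∈ HLplus ξ L := by
        constructor
        · intro a ha b hb
          rw [map_smul, map_smul, smul_eq_mul, smul_eq_mul, hzv.1 a ha b hb]
        · intro a ha b hb
          rw [map_smul, map_smul, smul_eq_mul, smul_eq_mul]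
          exact mul_lt_mul_of_pos_left (hzv.2 a ha b hb) hspos
      obtain ⟨N, hN⟩ := Metric.tendsto_atTop.1 (hRHS (s • zv) hqmem) 1 one_pos
      rw [Filter.eventually_atTop]
      refine ⟨N, fun n hn _ => ?_⟩
      have hNn := hN n hn
      rw [Real.dist_eq, sub_zero, abs_of_nonneg Metric.infDist_nonneg] at hNn
      have hSne : ((fun h => p + s • zv + h) '' HLplus ξ L).Nonempty :=
        ⟨p + s • zv + zv, ⟨zv, hzv, rfl⟩⟩
      obtain ⟨ypt, hyS, hd⟩ := (Metric.infDist_lt_iff hSne).1 hNn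
      obtain ⟨h0, hh0, rfl⟩ := hyS
      set e : V := pseq n - (p + s • zv + h0) with hedef
      have hne1 : ‖e‖ < 1 := by rw [hedef, ← dist_eq_norm]; exact hd
      have hpn : pseq n = p + s • zv + h0 + e := by rw [hedef]; abel
      have hcomp : ξ ℓ (pseq n) - ξ k (pseq n)
          = (ξ ℓ p - ξ k p) + s * g + (ξ ℓ h0 - ξ k h0) + (ξ ℓ e - ξ k e) := by
        rw [hpn]
        simp only [map_add, map_smul, smul_eq_mul, hgdef]
        ring
      have hb3 : |ξ ℓ e| ≤ C * ‖e‖ := hC ℓ e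
      have hb4 : |ξ k e| ≤ C * ‖e‖ := hC k e
      have hb7 : C * ‖e‖ ≤ C := by
        have := mul_le_mul_of_nonneg_left (le_of_lt hne1) (le_of_lt hCpos)
        simpa using this
      have hh0pos : 0 < ξ ℓ h0 - ξ k h0 := sub_pos.2 (hh0.2 ℓ hℓ k hk)
      rw [abs_le] at hb3 hb4
      rw [hcomp]
      linarith [hb3.1, hb3.2, hb4.1, hb4.2]
    exact hall.mono (fun n hn _ => hn)

end Main2
/-- Let `(p_n)` be a sequence in `V`, `p ∈ V`, and `L` a dual face or
`L = K`. The functions `u ↦ ν(p_n−u) − ν(p_n)` converge uniformly on bounded subsets of `V`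
to `u ↦ ν_L(p−u) − ν_L(p)` if and only if for every `q ∈ H_L⁺` the distances
`dist(p_n, p + q + H_L⁺)` tend to `0`. -/
theorem horofunction_convergence_criterion
    {V : Type*} [NormedAddCommGroup V] [InnerProductSpace ℝ V] [FiniteDimensional ℝ V]
    {m : ℕ} (ξ : Fin (m + 1) → V →ₗ[ℝ] ℝ)
    (hfacet : ∀ k, ∃ u : V, ξ k u = 1 ∧ ∀ l, l ≠ k → ξ l u < 1)
    (hpos : ∀ u : V, u ≠ 0 → 0 < nu ξ u)
    (L : Finset (Fin (m + 1))) (hL : IsDualFace ξ L ∨ L = Finset.univ)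
    (pseq : ℕ → V) (p : V) :
    (∀ R > (0 : ℝ), ∀ ε > (0 : ℝ), ∃ N : ℕ, ∀ n ≥ N, ∀ u : V, ‖u‖ ≤ R →
        |nu ξ (pseq n - u) - nu ξ (pseq n) - (nuL ξ L (p - u) - nuL ξ L p)| < ε) ↔
      (∀ q ∈ HLplus ξ L,
        Filter.Tendsto (fun n => Metric.infDist (pseq n) ((fun h => p + q + h) '' HLplus ξ L))
          Filter.atTop (nhds 0)) := by
  have hLne : L.Nonempty := L_nonempty ξ L hL
  obtain ⟨zv, hzv⟩ := exists_zv ξ L hL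
  obtain ⟨C, hC1, hC⟩ := exists_C ξ
  constructor
  · intro hLHS q hq
    have hpt : ∀ u : V, Filter.Tendsto (fun n => nu ξ (pseq n - u) - nu ξ (pseq n))
        Filter.atTop (nhds (nuL ξ L (p - u) - nuL ξ L p)) := by
      intro u
      rw [Metric.tendsto_atTop]
      intro ε hε
      obtain ⟨N, hN⟩ := hLHS (‖u‖ + 1) (by positivity) ε hε
      exact ⟨N, fun n hn => by
        rw [Real.dist_eq]
        exact hN n hn u (by linarith [norm_nonneg u])⟩
    obtain ⟨hA, hB⟩ := lemI ξ L pseq p hLne hfacet hpt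
    exact lemII ξ L pseq p hLne hC1 hC hA hB hq
  · intro hRHS
    obtain ⟨hA, hB⟩ := lemIII ξ L pseq p hLne hC1 hC hzv hRHS
    exact lemIV ξ L pseq p hLne hC1 hC hA hB
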